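/- Let (M_n)_{n≥0} be any sequence of positive integers. Define (N_n)_{n≥1} by N_1 = 1, N_2 = M_0, and N_{n+2} = (M_n N_{n+1} + 1) N_n for n ≥ 1, and define (A_n)_{n≥0} by A_0 = M_0 and A_n = M_n N_{n+1} + 1 for n ≥ 1. Then the alternating series Σ_{n=0}^∞ (−1)^n / (A_0 A_1 ⋯ A_n) is equivalent to the simple continued fraction [0; M_0, M_1 N_1, M_2 N_2, M_3 N_3, …]; that is, with partial quotients a_1 = M_0 and a_{n+1} = M_n N_n for n ≥ 1, and convergents p_n/q_n defined by p_0 = 0, q_0 = 1, p_1 = 1, q_1 = a_1, p_{n+1} = a_{n+1} p_n + p_{n-1}, q_{n+1} = a_{n+1} q_n + q_{n-1}, one has Σ_{i=0}^{n} (−1)^i / (A_0 A_1 ⋯ A_i) = p_{n+1}/q_{n+1} for all n ≥ 0. Moreover A_{n+1} > A_n for all n ≥ 0, so the series is the Pierce expansion of its sum. -/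

import Mathlib

/-- The three-step construction: given positive integers `M_n`, define `N` and `A` as in
Corollary (i). Then the series `∑ (-1)^n / (A_0 ⋯ A_n)` is equivalent to the simple
continued fraction `[0; M_0, M_1 N_1, M_2 N_2, …]`, and `A` is strictly increasing. -/
theorem stmt_11 (M N A a p q : ℕ → ℕ)
    (hM : ∀ n : ℕ, 0 < M n)
    (hN1 : N 1 = 1) (hN2 : N 2 = M 0)
    (hN : ∀ n : ℕ, 1 ≤ n → N (n + 2) = (M n * N (n + 1) + 1) * N n)
    (hA0 : A 0 = M 0) (hA : ∀ n : ℕ, 1 ≤ n → A n = M n * N (n + 1) + 1)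
    (ha1 : a 1 = M 0) (ha : ∀ n : ℕ, 1 ≤ n → a (n + 1) = M n * N n)
    (hp0 : p 0 = 0) (hq0 : q 0 = 1) (hp1 : p 1 = 1) (hq1 : q 1 = a 1)
    (hp : ∀ n : ℕ, p (n + 2) = a (n + 2) * p (n + 1) + p n)
    (hq : ∀ n : ℕ, q (n + 2) = a (n + 2) * q (n + 1) + q n) :
    (∀ n : ℕ,
      (∑ i ∈ Finset.range (n + 1), (-1 : ℝ) ^ i / ∏ j ∈ Finset.range (i + 1), (A j : ℝ))
        = (p (n + 1) : ℝ) / (q (n + 1) : ℝ)) ∧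
    (∀ n : ℕ, A n < A (n + 1)) := by
  -- positivity of N
  have hNpos : ∀ n : ℕ, 0 < N (n + 1) ∧ 0 < N (n + 2) := by
    intro n
    induction n with
    | zero => exact ⟨by rw [hN1]; norm_num, by rw [hN2]; exact hM 0⟩
    | succ k ih =>
      refine ⟨ih.2, ?_⟩
      rw [hN (k + 1) (by omega)]
      have := ih.1
      positivity
  -- q n = N (n+1)
  have hqN : ∀ n : ℕ, q n = N (n + 1) ∧ q (n + 1) = N (n + 2) := by
    intro n
    induction n with
    | zero => exact ⟨by rw [hq0, hN1], by rw [hq1, ha1, hN2]⟩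
    | succ k ih =>
      refine ⟨ih.2, ?_⟩
      rw [hq k, ha (k + 1) (by omega), ih.1, ih.2, hN (k + 1) (by omega)]
      ring
  have hqpos : ∀ n : ℕ, 0 < q n := fun n => (hqN n).1 ▸ (hNpos n).1
  -- key: q (n+2) = A (n+1) * q n
  have hq2 : ∀ n : ℕ, q (n + 2) = A (n + 1) * q n := by
    intro n
    rw [hq n, ha (n + 1) (by omega), hA (n + 1) (by omega),
      (hqN n).1, (hqN n).2]
    ring
  -- product = q n * q (n+1)
  have hprod : ∀ n : ℕ, (∏ j ∈ Finset.range (n + 1), A j) = q n * q (n + 1) := by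
    intro n
    induction n with
    | zero => simp [hA0, hq0, hq1, ha1]
    | succ k ih =>
      rw [Finset.prod_range_succ, ih, hq2 k]
      ring
  -- determinant identity
  have hdet : ∀ n : ℕ, (p (n + 1) : ℤ) * q n - p n * q (n + 1) = (-1) ^ n := by
    intro n
    induction n with
    | zero => simp [hp0, hq0, hp1]
    | succ k ih =>
      rw [hp k, hq k]
      push_cast
      push_cast at ih
      ring_nf
      ring_nf at ih
      linarith [ih]
  constructor
  · intro n
    induction n with
    | zero =>
      norm_num [Finset.sum_range_one, Finset.prod_range_one, hp1, hq1, ha1, hA0]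
    | succ k ih =>
      rw [Finset.sum_range_succ, ih]
      have hpr : (∏ j ∈ Finset.range (k + 1 + 1), (A j : ℝ)) = (q (k + 1) : ℝ) * q (k + 2) := by
        exact_mod_cast hprod (k + 1)
      rw [hpr]
      simp only [show k + 1 + 1 = k + 2 from rfl]
      have h1 : (q (k + 1) : ℝ) ≠ 0 := by exact_mod_cast (hqpos (k + 1)).ne'
      have h2 : (q (k + 2) : ℝ) ≠ 0 := by exact_mod_cast (hqpos (k + 2)).ne'
      have hd : (p (k + 2) : ℝ) * q (k + 1) - p (k + 1) * q (k + 2) = (-1) ^ (k + 1) := by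
        exact_mod_cast hdet (k + 1)
      field_simp
      linear_combination (-1 : ℝ) * hd
  · intro n
    match n with
    | 0 =>
      rw [hA0, hA 1 (by omega), hN2]
      nlinarith [hM 0, hM 1]
    | Nat.succ m =>
      rw [hA (m + 1) (by omega), hA (m + 2) (by omega), hN (m + 1) (by omega)]
      simp only [show m + 1 + 1 = m + 2 from rfl]
      have h1 := (hNpos m).1
      have h4 := hM (m + 2)
      have key : M (m + 1) * N (m + 2) + 1 ≤
          M (m + 2) * ((M (m + 1) * N (m + 2) + 1) * N (m + 1)) := by
        calc M (m + 1) * N (m + 2) + 1 = (M (m + 1) * N (m + 2) + 1) * 1 := by ring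
          _ ≤ (M (m + 1) * N (m + 2) + 1) * N (m + 1) := Nat.mul_le_mul_left _ h1
          _ ≤ M (m + 2) * ((M (m + 1) * N (m + 2) + 1) * N (m + 1)) :=
            Nat.le_mul_of_pos_left _ h4
      omega
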